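/- Let (Ω, P) be a probability space, h ∈ L¹(Ω) with E[h] = 0, and M > 0. Define D = {|h| ≤ 2M} and g = 1_D h − E[1_D h]. Then |g| ≤ 4M almost surely, E[g] = 0, and (M² + (1/12) E[|g|²])^{1/2} + (1/4) E[|h − g|] ≤ E[(M² + |h|²)^{1/2}]. -/

import Mathlib

open MeasureTheory

theorem stmt_7 {Ω : Type*} [MeasurableSpace Ω] (μ : Measure Ω) [IsProbabilityMeasure μ]
    (h : Ω → ℂ) (hint : Integrable h μ) (hmean : ∫ ω, h ω ∂μ = 0)
    (M : ℝ) (hM : 0 < M)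
    (D : Set Ω) (hD : D = {ω | ‖h ω‖ ≤ 2 * M})
    (g : Ω → ℂ) (hg : ∀ ω, g ω = D.indicator h ω - ∫ x, D.indicator h x ∂μ) :
    (∀ᵐ ω ∂μ, ‖g ω‖ ≤ 4 * M) ∧ (∫ ω, g ω ∂μ = 0) ∧
      Real.sqrt (M ^ 2 + (1 / 12) * ∫ ω, ‖g ω‖ ^ 2 ∂μ)
          + (1 / 4) * ∫ ω, ‖h ω - g ω‖ ∂μ
        ≤ ∫ ω, Real.sqrt (M ^ 2 + ‖h ω‖ ^ 2) ∂μ := by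
  set X : Ω → ℂ := D.indicator h with hX
  set c : ℂ := ∫ x, X x ∂μ with hc
  have hDind : ∀ ω, X ω = if ‖h ω‖ ≤ 2*M then h ω else 0 := by
    intro ω
    by_cases hω : ‖h ω‖ ≤ 2*M
    · rw [hX, Set.indicator_of_mem (by rw [hD]; exact hω), if_pos hω]
    · rw [hX, Set.indicator_of_notMem (by rw [hD]; exact hω), if_neg hω]
  have haem : AEMeasurable h μ := hint.1.aemeasurable
  -- measurability of X
  have hfm : Measurable (fun z : ℂ => if ‖z‖ ≤ 2*M then z else 0) := by
    apply Measurable.ite _ measurable_id measurable_const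
    exact measurableSet_le continuous_norm.measurable measurable_const
  have hXmeas : AEStronglyMeasurable X μ := by
    have : X = (fun z : ℂ => if ‖z‖ ≤ 2*M then z else 0) ∘ h := by
      funext ω; exact hDind ω
    rw [this]
    exact (hfm.comp_aemeasurable haem).aestronglyMeasurable
  -- bounds and integrability of X
  have hXnorm : ∀ ω, ‖X ω‖ ≤ 2*M := by
    intro ω; rw [hDind ω]
    split_ifs with hω
    · exact hω
    · simp; positivity
  have hXle : ∀ ω, ‖X ω‖ ≤ ‖h ω‖ := by
    intro ω; rw [hDind ω]
    split_ifs with hω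
    · exact le_rfl
    · simp
  have hXint : Integrable X μ := hint.mono hXmeas (Filter.Eventually.of_forall hXle)
  have hcnorm : ‖c‖ ≤ 2*M := by
    have := norm_integral_le_of_norm_le_const (μ := μ) (Filter.Eventually.of_forall hXnorm)
    simpa [measure_univ] using this
  -- Part 1
  have part1 : ∀ᵐ ω ∂μ, ‖g ω‖ ≤ 4 * M := by
    apply Filter.Eventually.of_forall
    intro ω
    rw [hg ω]
    calc ‖X ω - c‖ ≤ ‖X ω‖ + ‖c‖ := norm_sub_le _ _
      _ ≤ 2*M + 2*M := add_le_add (hXnorm ω) hcnorm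
      _ = 4*M := by ring
  -- Part 2
  have part2 : ∫ ω, g ω ∂μ = 0 := by
    have : ∫ ω, g ω ∂μ = (∫ ω, X ω ∂μ) - ∫ _, c ∂μ := by
      simp_rw [hg]; exact integral_sub hXint (integrable_const c)
    simp [integral_const, measure_univ] at this
    simpa [← hc] using this
  refine ⟨part1, part2, ?_⟩
  -- Part 3 setup
  set φ : Ω → ℝ := fun ω => ‖X ω‖^2 with hφ
  set ψ : Ω → ℝ := fun ω => ‖h ω - X ω‖ with hψ
  have hφint : Integrable φ μ := by
    apply (hint.norm.const_mul (2*M)).mono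
    · have : φ = (fun z : ℂ => ‖z‖ ^ 2) ∘ X := rfl
      rw [this]
      exact (continuous_norm.pow 2).comp_aestronglyMeasurable hXmeas
    · apply Filter.Eventually.of_forall
      intro ω
      have h1 : ‖X ω‖ ≤ 2*M := by exact hXnorm ω
      have h0 : 0 ≤ ‖X ω‖ := norm_nonneg _
      have h2 : ‖X ω‖ ≤ ‖h ω‖ := by exact hXle ω
      simp only [hφ, Real.norm_eq_abs, abs_of_nonneg (by positivity : (0:ℝ) ≤ ‖X ω‖^2)]
      calc ‖X ω‖^2 = ‖X ω‖ * ‖X ω‖ := sq (‖X ω‖) ▸ by ring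
        _ ≤ (2*M) * ‖h ω‖ := mul_le_mul h1 h2 h0 (by positivity)
        _ ≤ ‖2*M * ‖h ω‖‖ := le_abs_self _
  have hψint : Integrable ψ μ := by
    have := (hint.sub hXint).norm
    simpa [hψ] using this
  have hψ0 : ∀ ω, 0 ≤ ψ ω := fun ω => norm_nonneg _
  have hφ0 : ∀ ω, 0 ≤ φ ω := fun ω => sq_nonneg _
  -- ‖c‖ ≤ ∫ ψ
  have hcψ : ‖c‖ ≤ ∫ ω, ψ ω ∂μ := by
    have hceq : c = -∫ ω, (h ω - X ω) ∂μ := by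
      rw [integral_sub hint hXint, hmean]; simp [hc]
    calc ‖c‖ = ‖∫ ω, (h ω - X ω) ∂μ‖ := by rw [hceq, norm_neg]
      _ ≤ ∫ ω, ‖h ω - X ω‖ ∂μ := norm_integral_le_integral_norm _
      _ = ∫ ω, ψ ω ∂μ := by simp [hψ]
  -- ∫ |h - g| ≤ 2 ∫ ψ
  have hhg : ∀ ω, h ω - g ω = (h ω - X ω) + c := by intro ω; rw [hg ω]; ring
  have hhgint : Integrable (fun ω => ‖h ω - g ω‖) μ := by
    have := ((hint.sub hXint).add (integrable_const c)).norm
    simp_rw [hhg]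
    simpa using this
  have hI3 : ∫ ω, ‖h ω - g ω‖ ∂μ ≤ 2 * ∫ ω, ψ ω ∂μ := by
    have hψcint : Integrable (fun ω => ψ ω + ‖c‖) μ := hψint.add (integrable_const _)
    have step1 : ∫ ω, ‖h ω - g ω‖ ∂μ ≤ ∫ ω, (ψ ω + ‖c‖) ∂μ := by
      apply integral_mono hhgint hψcint
      intro ω
      simp only []
      rw [hhg ω]
      exact le_trans (norm_add_le _ _) (le_of_eq (by simp [hψ]))
    have step2 : ∫ ω, (ψ ω + ‖c‖) ∂μ = (∫ ω, ψ ω ∂μ) + ‖c‖ := by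
      rw [integral_add hψint (integrable_const _), integral_const]
      simp [measure_univ]
    linarith [hcψ, step1, step2]
  -- variance: ∫ |g|² ≤ ∫ φ
  have hgsq_int : Integrable (fun ω => ‖g ω‖^2) μ := by
    apply (integrable_const ((4*M)^2)).mono
    · have : (fun ω => ‖g ω‖^2) = (fun z : ℂ => ‖z - c‖ ^ 2) ∘ X := by
        funext ω; simp [hg ω]
      rw [this]
      exact ((continuous_norm.comp (continuous_id.sub continuous_const)).pow 2).comp_aestronglyMeasurable hXmeas
    · apply Filter.Eventually.of_forall
      intro ω
      have h1 : ‖g ω‖ ≤ 4*M := by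
        rw [hg ω]
        calc ‖X ω - c‖ ≤ ‖X ω‖ + ‖c‖ := norm_sub_le _ _
          _ ≤ 4*M := by linarith [hXnorm ω, hcnorm]
      have h0 : (0:ℝ) ≤ ‖g ω‖ := norm_nonneg _
      simp only [Real.norm_eq_abs]
      rw [abs_of_nonneg (sq_nonneg (‖g ω‖)), abs_of_nonneg (by positivity : (0:ℝ) ≤ (4*M)^2)]
      exact pow_le_pow_left₀ h0 h1 2
  have hXre_int : Integrable (fun ω => (X ω).re) μ := hXint.re
  have hXim_int : Integrable (fun ω => (X ω).im) μ := hXint.im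
  have hXre : ∫ ω, (X ω).re ∂μ = c.re := by
    have := integral_re (μ := μ) hXint
    simpa using this
  have hXim : ∫ ω, (X ω).im ∂μ = c.im := by
    have := integral_im (μ := μ) hXint
    simpa using this
  have hvar : ∫ ω, ‖g ω‖^2 ∂μ ≤ ∫ ω, φ ω ∂μ := by
    have hpt : ∀ ω, ‖g ω‖^2 =
        φ ω - (2*c.re) * (X ω).re - (2*c.im) * (X ω).im + (c.re^2 + c.im^2) := by
      intro ω
      rw [hg ω]
      simp only [hφ, Complex.sq_norm, Complex.normSq_apply, Complex.sub_re, Complex.sub_im]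
      ring
    have i1 : Integrable (fun ω => φ ω - (2*c.re) * (X ω).re) μ :=
      hφint.sub (hXre_int.const_mul _)
    have i2 : Integrable (fun ω => φ ω - (2*c.re) * (X ω).re - (2*c.im) * (X ω).im) μ :=
      i1.sub (hXim_int.const_mul _)
    have hcalc : ∫ ω, ‖g ω‖^2 ∂μ
        = (∫ ω, φ ω ∂μ) - (c.re^2 + c.im^2) := by
      simp_rw [hpt]
      rw [integral_add i2 (integrable_const _),
          integral_sub i1 (hXim_int.const_mul _),
          integral_sub hφint (hXre_int.const_mul _),
          integral_const_mul, integral_const_mul, integral_const, hXre, hXim]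
      simp [measure_univ]
      ring
    nlinarith [sq_nonneg c.re, sq_nonneg c.im, hcalc]
  -- pointwise key inequality and its integral
  set F : Ω → ℝ := fun ω => Real.sqrt (M^2 + ‖h ω‖^2) with hF
  have hFint : Integrable F μ := by
    apply ((integrable_const M).add hint.norm).mono
    · have : F = (fun z : ℂ => Real.sqrt (M^2 + ‖z‖ ^2)) ∘ h := rfl
      rw [this]
      exact ((Real.continuous_sqrt.comp (continuous_const.add (continuous_norm.pow 2)))).comp_aestronglyMeasurable hint.1
    · apply Filter.Eventually.of_forall
      intro ω
      have h0 : (0:ℝ) ≤ ‖h ω‖ := norm_nonneg _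
      simp only [hF, Real.norm_eq_abs, abs_of_nonneg (Real.sqrt_nonneg _)]
      have : Real.sqrt (M^2 + ‖h ω‖^2) ≤ Real.sqrt ((M + ‖h ω‖)^2) := by
        apply Real.sqrt_le_sqrt; nlinarith
      rw [Real.sqrt_sq (by positivity)] at this
      calc Real.sqrt (M^2 + ‖h ω‖^2) ≤ M + ‖h ω‖ := this
        _ ≤ |M + ‖h ω‖| := by exact le_abs_self _
  have hkey : ∀ ω, M + φ ω/(24*M) + ψ ω/2 ≤ F ω := by
    intro ω
    set t : ℝ := ‖h ω‖ with hht
    have ht0 : 0 ≤ t := norm_nonneg _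
    have habs : ‖h ω‖^2 = t^2 := by rw [hht]
    by_cases hcase : t ≤ 2*M
    · have hφω : φ ω = t^2 := by
        simp only [hφ, hDind ω, if_pos (show ‖h ω‖ ≤ 2*M from hcase), hht]
      have hψω : ψ ω = 0 := by
        simp only [hψ, hDind ω, if_pos (show ‖h ω‖ ≤ 2*M from hcase)]
        simp
      rw [hφω, hψω]
      rw [hF]
      rw [← Real.sqrt_sq (by positivity : (0:ℝ) ≤ M + t^2/(24*M) + 0/2)]
      apply Real.sqrt_le_sqrt
      have hs : t^2/(24*M) ≤ t/12 := by
        rw [div_le_iff₀ (by positivity)]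
        nlinarith
      have hs0 : 0 ≤ t^2/(24*M) := by positivity
      have h1 : M * (t^2/(24*M)) = t^2/24 := by field_simp
      nlinarith [mul_le_mul hs hs hs0 (by positivity : (0:ℝ) ≤ t/12), habs]
    · push_neg at hcase
      have hφω : φ ω = 0 := by
        simp only [hφ, hDind ω, if_neg (show ¬ ‖h ω‖ ≤ 2*M from not_le.mpr hcase)]
        simp
      have hψω : ψ ω = t := by
        simp only [hψ, hDind ω, if_neg (show ¬ ‖h ω‖ ≤ 2*M from not_le.mpr hcase), sub_zero, hht]
      rw [hφω, hψω, hF]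
      rw [← Real.sqrt_sq (by positivity : (0:ℝ) ≤ M + 0/(24*M) + t/2)]
      apply Real.sqrt_le_sqrt
      rw [habs, zero_div]
      nlinarith [mul_pos hM (lt_trans (by linarith) hcase : (0:ℝ) < t)]
  have hIkey : M + (∫ ω, φ ω ∂μ)/(24*M) + (∫ ω, ψ ω ∂μ)/2 ≤ ∫ ω, F ω ∂μ := by
    have j1 : Integrable (fun ω => M + φ ω/(24*M)) μ :=
      (integrable_const M).add (hφint.div_const _)
    have hLint : Integrable (fun ω => M + φ ω/(24*M) + ψ ω/2) μ :=
      j1.add (hψint.div_const _)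
    have := integral_mono hLint hFint hkey
    rw [integral_add j1 (hψint.div_const _),
        integral_add (integrable_const M) (hφint.div_const _),
        integral_const, integral_div, integral_div] at this
    simpa [measure_univ] using this
  -- assemble
  have hT0 : 0 ≤ ∫ ω, ‖g ω‖^2 ∂μ := integral_nonneg (fun ω => sq_nonneg _)
  have hsqrt : Real.sqrt (M ^ 2 + (1/12) * ∫ ω, ‖g ω‖^2 ∂μ)
      ≤ M + (∫ ω, ‖g ω‖^2 ∂μ)/(24*M) := by
    set T := ∫ ω, ‖g ω‖^2 ∂μ
    rw [← Real.sqrt_sq (by positivity : (0:ℝ) ≤ M + T/(24*M))]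
    apply Real.sqrt_le_sqrt
    have h1 : M * (T/(24*M)) = T/24 := by field_simp
    nlinarith [sq_nonneg (T/(24*M))]
  have hmono : (∫ ω, ‖g ω‖^2 ∂μ)/(24*M) ≤ (∫ ω, φ ω ∂μ)/(24*M) := by
    gcongr
  linarith [hsqrt, hIkey, hI3, hmono]
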